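/- Let q = 2^m with m ≥ 2. A linear fractional transformation π ∈ PGL_2(GF(q^2)) maps the set U_{q+1} of (q+1)-th roots of unity onto itself if and only if π has one of the following three forms: (I) u ↦ u_0 u with u_0 ∈ U_{q+1}; (II) u ↦ u_0 u^{-1} with u_0 ∈ U_{q+1}; (III) u ↦ (u + c^q u_0)/(cu + u_0) with u_0 ∈ U_{q+1} and c ∈ GF(q^2)* \ U_{q+1}. -/

import Mathlib

private lemma quad_aux {F : Type*} [Field F] {α β γ h : F} (h0 : h ≠ 0) (h1 : h ≠ 1)
    (h2 : h ^ 2 ≠ 1) (e1 : α + β + γ = 0) (e2 : α * h ^ 2 + β * h + γ = 0)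
    (e3 : α * (h ^ 2) ^ 2 + β * h ^ 2 + γ = 0) : α = 0 ∧ β = 0 ∧ γ = 0 := by
  have k1 : (h - 1) * (α * (h + 1) + β) = 0 := by linear_combination e2 - e1
  have k2 : (h ^ 2 - 1) * (α * (h ^ 2 + 1) + β) = 0 := by linear_combination e3 - e1
  have k1' : α * (h + 1) + β = 0 :=
    (mul_eq_zero.mp k1).resolve_left (sub_ne_zero.mpr h1)
  have k2' : α * (h ^ 2 + 1) + β = 0 :=
    (mul_eq_zero.mp k2).resolve_left (sub_ne_zero.mpr h2)
  have kα : α * h * (h - 1) = 0 := by linear_combination k2' - k1'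
  have hα : α = 0 := by
    rcases mul_eq_zero.mp kα with h' | h'
    · rcases mul_eq_zero.mp h' with h'' | h''
      · exact h''
      · exact absurd h'' h0
    · exact absurd (sub_eq_zero.mp h') h1
  have hβ : β = 0 := by linear_combination k1' - (h + 1) * hα
  exact ⟨hα, hβ, by linear_combination e1 - hα - hβ⟩

/-- Let `q = 2^m` with `m ≥ 2`. A linear fractional transformation of `PGL_2(GF(q^2))`
maps `U_{q+1}` onto itself iff it has one of the three forms (I), (II), (III). -/
theorem stmt4 (m q : ℕ) (hm : 2 ≤ m) (hq : q = 2 ^ m) (F : Type*) [Field F] [Fintype F]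
    (hF : Fintype.card F = q ^ 2) (a b c d : F) (hdet : a * d + b * c ≠ 0) :
    (∀ u : F, u ^ (q + 1) = 1 → ((a * u + b) / (c * u + d)) ^ (q + 1) = 1) ↔
      ((∃ u₀ : F, u₀ ^ (q + 1) = 1 ∧
          ∀ u : F, u ^ (q + 1) = 1 → (a * u + b) / (c * u + d) = u₀ * u) ∨
       (∃ u₀ : F, u₀ ^ (q + 1) = 1 ∧
          ∀ u : F, u ^ (q + 1) = 1 → (a * u + b) / (c * u + d) = u₀ * u⁻¹) ∨
       (∃ u₀ c' : F, u₀ ^ (q + 1) = 1 ∧ c' ≠ 0 ∧ c' ^ (q + 1) ≠ 1 ∧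
          ∀ u : F, u ^ (q + 1) = 1 →
            (a * u + b) / (c * u + d) = (u + c' ^ q * u₀) / (c' * u + u₀))) := by
  have hq4 : 4 ≤ q := by
    subst hq
    calc 4 = 2 ^ 2 := rfl
    _ ≤ 2 ^ m := Nat.pow_le_pow_right (by norm_num) hm
  have hq0 : q ≠ 0 := by omega
  -- characteristic 2
  have hring : ringChar F = 2 := by
    have h1 : (ringChar F).Prime := CharP.char_is_prime F (ringChar F)
    obtain ⟨n, _, hcard⟩ := FiniteField.card F (ringChar F)
    have hdvd : ringChar F ∣ 2 := by
      have h2 : ringChar F ∣ Fintype.card F := by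
        rw [hcard]; exact dvd_pow_self _ (by positivity)
      rw [hF, hq, ← pow_mul] at h2
      exact h1.dvd_of_dvd_pow h2
    exact ((Nat.prime_dvd_prime_iff_eq h1 Nat.prime_two).mp hdvd)
  haveI hCharP : CharP F 2 := hring ▸ ringChar.charP F
  haveI : Fact (Nat.Prime 2) := ⟨Nat.prime_two⟩
  have hch2 : (2 : F) = 0 := by exact_mod_cast CharP.cast_eq_zero F 2
  have hadd : ∀ x y : F, (x + y) ^ q = x ^ q + y ^ q := by
    intro x y; rw [hq]; exact add_pow_char_pow x y 2 m
  have hqq : ∀ x : F, (x ^ q) ^ q = x := by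
    intro x
    rw [← pow_mul, ← pow_two, ← hF]
    exact FiniteField.pow_card x
  have hUne : ∀ u : F, u ^ (q + 1) = 1 → u ≠ 0 := by
    rintro u hu rfl
    rw [zero_pow (by omega)] at hu
    exact one_ne_zero hu.symm
  classical
  constructor
  · intro H
    -- pole avoidance
    have hpole : ∀ u : F, u ^ (q + 1) = 1 → c * u + d ≠ 0 := by
      intro u hu hcu
      have h1 := H u hu
      rw [hcu, div_zero, zero_pow (by omega : q + 1 ≠ 0)] at h1
      exact one_ne_zero h1.symm
    have key : ∀ u : F, u ^ (q + 1) = 1 →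
        (a * b ^ q - c * d ^ q) * u ^ 2 + (a * a ^ q + b * b ^ q - c * c ^ q - d * d ^ q) * u
          + (a ^ q * b - c ^ q * d) = 0 := by
      intro u hu
      have hcu := hpole u hu
      have huq : u ^ q * u = 1 := by rw [← pow_succ]; exact hu
      have h1 : (a * u + b) ^ (q + 1) = (c * u + d) ^ (q + 1) := by
        have h2 := H u hu
        rwa [div_pow, div_eq_one_iff_eq (pow_ne_zero _ hcu)] at h2
      rw [pow_succ, pow_succ, ← pow_succ, ← pow_succ] at h1
      rw [pow_succ (a*u+b), pow_succ (c*u+d), hadd (a*u) b, hadd (c*u) d,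
        mul_pow, mul_pow] at h1
      linear_combination u * h1 + (c ^ q * (c * u + d) - a ^ q * (a * u + b)) * huq
    -- three distinct points on U
    obtain ⟨g, hg⟩ := IsCyclic.exists_generator (α := Fˣ)
    have horder : orderOf g = q ^ 2 - 1 := by
      rw [orderOf_eq_card_of_forall_mem_zpowers hg, Nat.card_eq_fintype_card,
        Fintype.card_units, hF]
    have e : q ^ 2 - 1 = (q - 1) * (q + 1) := by
      have h1 : q ^ 2 = q * q := sq q
      have h2 : (q - 1) * (q + 1) = q * q - 1 := by
        rcases Nat.exists_eq_add_of_le (show 1 ≤ q by omega) with ⟨s, rfl⟩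
        have : (1 + s) * (1 + s) = s * s + 2 * s + 1 := by ring
        have h3 : (1 + s - 1) * (1 + s + 1) = s * s + 2 * s := by
          have h4 : 1 + s - 1 = s := by omega
          rw [h4]; ring
        omega
      omega
    obtain ⟨h, hordh⟩ : ∃ h : Fˣ, orderOf h = q + 1 :=
      ⟨g ^ (q - 1), by
        rw [orderOf_pow, horder, e, Nat.gcd_comm, Nat.gcd_eq_left (dvd_mul_right _ _),
          Nat.mul_div_cancel_left _ (by omega : 0 < q - 1)]⟩
    have hval : ((h : F)) ^ (q + 1) = 1 := by
      have h2 : h ^ (q + 1) = 1 := by rw [← hordh]; exact pow_orderOf_eq_one h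
      have h3 := congrArg Units.val h2
      rwa [Units.val_pow_eq_pow_val, Units.val_one] at h3
    have hval2 : (((h : F)) ^ 2) ^ (q + 1) = 1 := by
      rw [← pow_mul, mul_comm, pow_mul, hval, one_pow]
    have hh0 : (h : F) ≠ 0 := Units.ne_zero h
    have hh1 : (h : F) ≠ 1 := by
      intro h'
      have : h = 1 := Units.ext h'
      rw [this, orderOf_one] at hordh; omega
    have hh2 : (h : F) ^ 2 ≠ 1 := by
      intro h'
      have : h ^ 2 = 1 := Units.ext (by rw [Units.val_pow_eq_pow_val]; exact h')
      have := Nat.le_of_dvd (by norm_num) (hordh ▸ orderOf_dvd_of_pow_eq_one this)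
      omega
    obtain ⟨hα, hβ, hγ⟩ := quad_aux hh0 hh1 hh2
      (by linear_combination key 1 (one_pow _)) (key (h : F) hval) (key ((h : F) ^ 2) hval2)
    rcases eq_or_ne c 0 with hc0 | hc0
    · -- form I
      have had : a * d ≠ 0 := by rw [hc0] at hdet; simpa using hdet
      have ha0 : a ≠ 0 := fun h' => had (by rw [h', zero_mul])
      have hd0 : d ≠ 0 := fun h' => had (by rw [h', mul_zero])
      have hb0 : b = 0 := by
        have h1 : a * b ^ q = 0 := by rw [hc0] at hα; linear_combination hα
        have h2 : b ^ q = 0 := (mul_eq_zero.mp h1).resolve_left ha0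
        exact pow_eq_zero_iff hq0 |>.mp h2
      left
      refine ⟨a / d, ?_, ?_⟩
      · rw [div_pow, div_eq_one_iff_eq (pow_ne_zero _ hd0), pow_succ, pow_succ]
        rw [hb0, hc0] at hβ
        linear_combination hβ
      · intro u hu
        rw [hb0, hc0, zero_mul, zero_add, add_zero]
        field_simp
    rcases eq_or_ne d 0 with hd0 | hd0
    · -- form II
      have hbc : b * c ≠ 0 := by rw [hd0] at hdet; simpa using hdet
      have hb0 : b ≠ 0 := fun h' => hbc (by rw [h', zero_mul])
      have ha0 : a = 0 := by
        have h1 : a ^ q * b = 0 := by rw [hd0] at hγ; linear_combination hγ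
        have h2 : a ^ q = 0 := (mul_eq_zero.mp h1).resolve_right hb0
        exact pow_eq_zero_iff hq0 |>.mp h2
      right; left
      refine ⟨b / c, ?_, ?_⟩
      · rw [div_pow, div_eq_one_iff_eq (pow_ne_zero _ hc0), pow_succ, pow_succ]
        rw [ha0, hd0] at hβ
        linear_combination hβ
      · intro u hu
        have hu0 : u ≠ 0 := hUne u hu
        rw [ha0, hd0, zero_mul, zero_add, add_zero]
        field_simp
    · -- form III
      have ha0 : a ≠ 0 := by
        intro h'
        rw [h'] at hα
        have h1 : c * d ^ q = 0 := by linear_combination -hα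
        rcases mul_eq_zero.mp h1 with h2 | h2
        · exact hc0 h2
        · exact hd0 (pow_eq_zero_iff hq0 |>.mp h2)
      have hb : a ^ q * b = c ^ q * d := by linear_combination hγ
      have hbq : a * b ^ q = c * d ^ q := by linear_combination hα
      have hAC : a * a ^ q - c * c ^ q ≠ 0 := by
        intro h'
        apply hdet
        have h2 : a ^ q * (a * d + b * c) = d * (a * a ^ q + c * c ^ q) := by
          linear_combination c * hb
        have h3 : a * a ^ q + c * c ^ q = 0 := by
          linear_combination h' + (c * c ^ q) * hch2
        rw [h3, mul_zero] at h2
        exact (mul_eq_zero.mp h2).resolve_left (pow_ne_zero _ ha0)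
      have hAD : a * a ^ q - d * d ^ q = 0 := by
        have hfac : (a * a ^ q - c * c ^ q) * (a * a ^ q - d * d ^ q) = 0 := by
          linear_combination (a * a ^ q) * hβ - (a * b ^ q) * hb - (c ^ q * d) * hbq
        exact (mul_eq_zero.mp hfac).resolve_left hAC
      right; right
      refine ⟨d / a, c / a, ?_, div_ne_zero hc0 ha0, ?_, ?_⟩
      · rw [div_pow, div_eq_one_iff_eq (pow_ne_zero _ ha0), pow_succ, pow_succ]
        linear_combination -hAD
      · intro h'
        rw [div_pow, div_eq_one_iff_eq (pow_ne_zero _ ha0), pow_succ, pow_succ] at h'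
        exact hAC (by linear_combination -h')
      · intro u hu
        have hcu := hpole u hu
        have hden : (c / a) * u + d / a = (c * u + d) / a := by ring
        have hden0 : (c / a) * u + d / a ≠ 0 := by
          rw [hden]; exact div_ne_zero hcu ha0
        rw [div_eq_div_iff hcu hden0, div_pow]
        field_simp
        linear_combination (c * u + d) * hb
  · -- backward direction
    rintro (⟨u₀, h₀, hf⟩ | ⟨u₀, h₀, hf⟩ | ⟨u₀, c', h₀, hc'0, hc'N, hf⟩) u hu
    · rw [hf u hu, mul_pow, h₀, hu, mul_one]
    · rw [hf u hu, mul_pow, inv_pow, hu, h₀, inv_one, mul_one]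
    · rw [hf u hu]
      have hu0 : u ≠ 0 := hUne u hu
      have hu₀0 : u₀ ≠ 0 := hUne u₀ h₀
      have huq : u ^ q * u = 1 := by rw [← pow_succ]; exact hu
      have hu₀q : u₀ ^ q * u₀ = 1 := by rw [← pow_succ]; exact h₀
      have hden : c' * u + u₀ ≠ 0 := by
        intro h'
        apply hc'N
        have hcu : c' * u = u₀ := by linear_combination h' - u₀ * hch2
        have h2 : (c' * u) ^ (q + 1) = 1 := by rw [hcu]; exact h₀
        rwa [mul_pow, hu, mul_one] at h2
      rw [pow_succ, ← pow_succ, pow_succ ((u + c' ^ q * u₀) / (c' * u + u₀)), div_pow,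
        div_mul_div_comm, hadd u (c' ^ q * u₀), hadd (c' * u) u₀, mul_pow, mul_pow, hqq c']
      have hnum : (u ^ q + c' * u₀ ^ q) * (u + c' ^ q * u₀)
          = (c' ^ q * u ^ q + u₀ ^ q) * (c' * u + u₀) := by
        linear_combination (1 - c' * c' ^ q) * huq - (1 - c' * c' ^ q) * hu₀q
      rw [hnum]
      have hD : c' ^ q * u ^ q + u₀ ^ q ≠ 0 := by
        rw [← mul_pow, ← hadd]
        exact pow_ne_zero _ hden
      exact div_self (mul_ne_zero hD hden)
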